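/- There is no factorizable stochastic model whose predicted phenomenon equals the singlet phenomenon; that is, there do not exist a probability space (Λ, μ) and functions p(A|a, λ), q(B|b, λ) ∈ [0, 1], measurable in λ, with Σ_A p(A|a, λ) = Σ_B q(B|b, λ) = 1, such that ∫_Λ p(A|a, λ)·q(B|b, λ) dμ(λ) = (1 − A·B·⟨a, b⟩)/4 for all A, B ∈ {−1, 1} and all unit vectors a, b ∈ ℝ³. -/

import Mathlib

open MeasureTheory
open scoped RealInnerProductSpace

/-- Build a unit vector in `EuclideanSpace ℝ (Fin 3)` from coordinates. -/
noncomputable def bellVec (x y z : ℝ) : EuclideanSpace ℝ (Fin 3) :=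
  (WithLp.equiv 2 (Fin 3 → ℝ)).symm ![x, y, z]

lemma bellVec_norm (x y z : ℝ) (h : x ^ 2 + y ^ 2 + z ^ 2 = 1) : ‖bellVec x y z‖ = 1 := by
  rw [EuclideanSpace.norm_eq]
  simp [bellVec, Fin.sum_univ_three]
  exact h

lemma bellVec_inner (x y z x' y' z' : ℝ) :
    ⟪bellVec x y z, bellVec x' y' z'⟫ = x * x' + y * y' + z * z' := by
  simp [bellVec, PiLp.inner_apply, Fin.sum_univ_three]; ring

lemma bell_chsh_pt (u v x w : ℝ) (hu : |u| ≤ 1) (hv : |v| ≤ 1) (hx : |x| ≤ 1) (hw : |w| ≤ 1) :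
    |u * v + u * w + x * v - x * w| ≤ 2 := by
  have h1 : |u * (v + w) + x * (v - w)| ≤ |v + w| + |v - w| := by
    calc |u * (v + w) + x * (v - w)| ≤ |u * (v + w)| + |x * (v - w)| := abs_add_le _ _
    _ = |u| * |v + w| + |x| * |v - w| := by rw [abs_mul, abs_mul]
    _ ≤ 1 * |v + w| + 1 * |v - w| := by
        have h3 := abs_nonneg (v + w); have h4 := abs_nonneg (v - w); nlinarith
    _ = |v + w| + |v - w| := by ring
  have h2 : |v + w| + |v - w| ≤ 2 := by
    rw [abs_le] at hv hw
    rcases abs_cases (v + w) with ⟨e1, _⟩ | ⟨e1, _⟩ <;>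
      rcases abs_cases (v - w) with ⟨e2, _⟩ | ⟨e2, _⟩ <;> linarith
  calc |u * v + u * w + x * v - x * w| = |u * (v + w) + x * (v - w)| := by ring_nf
  _ ≤ 2 := le_trans h1 h2

/-- **Bell's 1976 theorem: quantum phenomena violate local causality.**
No factorizable (locally causal) stochastic model reproduces the singlet phenomenon:
for every probability space `(Λ, μ)` and local outcome distributions
`p(A|a,λ), q(B|b,λ) ∈ [0,1]`, measurable in `λ`, with `Σ_A p(A|a,λ) = Σ_B q(B|b,λ) = 1`,
it is not the case that `∫ p(A|a,λ)·q(B|b,λ) dμ(λ) = (1 − A·B·⟨a,b⟩)/4`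
for all outcomes `A, B ∈ {−1,1}` and all unit vectors `a, b ∈ ℝ³`. -/
theorem bell_1976_no_factorizable_model
    {Λ : Type*} [MeasurableSpace Λ] (μ : Measure Λ) [IsProbabilityMeasure μ]
    (p q : ℝ → {v : EuclideanSpace ℝ (Fin 3) // ‖v‖ = 1} → Λ → ℝ)
    (hp0 : ∀ A, (A = 1 ∨ A = -1) → ∀ a l, 0 ≤ p A a l)
    (hp1 : ∀ A, (A = 1 ∨ A = -1) → ∀ a l, p A a l ≤ 1)
    (hq0 : ∀ B, (B = 1 ∨ B = -1) → ∀ b l, 0 ≤ q B b l)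
    (hq1 : ∀ B, (B = 1 ∨ B = -1) → ∀ b l, q B b l ≤ 1)
    (hpsum : ∀ a l, p 1 a l + p (-1) a l = 1)
    (hqsum : ∀ b l, q 1 b l + q (-1) b l = 1)
    (hpm : ∀ A a, Measurable fun l => p A a l)
    (hqm : ∀ B b, Measurable fun l => q B b l) :
    ¬ ∀ (A B : ℝ), (A = 1 ∨ A = -1) → (B = 1 ∨ B = -1) →
        ∀ (a b : {v : EuclideanSpace ℝ (Fin 3) // ‖v‖ = 1}),
          (∫ l, p A a l * q B b l ∂μ)
            = (1 - A * B * ⟪(a : EuclideanSpace ℝ (Fin 3)), (b : EuclideanSpace ℝ (Fin 3))⟫) / 4 := by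
  intro h
  set s := Real.sqrt 2 with hs
  have hs0 : 0 < s := Real.sqrt_pos.2 (by norm_num)
  have hs2 : s ^ 2 = 2 := Real.sq_sqrt (by norm_num)
  have hna1 : ‖bellVec 1 0 0‖ = 1 := bellVec_norm _ _ _ (by norm_num)
  have hna2 : ‖bellVec 0 1 0‖ = 1 := bellVec_norm _ _ _ (by norm_num)
  have hnb1 : ‖bellVec (-(1/s)) (-(1/s)) 0‖ = 1 := bellVec_norm _ _ _ (by
    field_simp; linarith [hs2])
  have hnb2 : ‖bellVec (-(1/s)) (1/s) 0‖ = 1 := bellVec_norm _ _ _ (by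
    field_simp; linarith [hs2])
  set a1 : {v : EuclideanSpace ℝ (Fin 3) // ‖v‖ = 1} := ⟨bellVec 1 0 0, hna1⟩ with ha1
  set a2 : {v : EuclideanSpace ℝ (Fin 3) // ‖v‖ = 1} := ⟨bellVec 0 1 0, hna2⟩ with ha2
  set b1 : {v : EuclideanSpace ℝ (Fin 3) // ‖v‖ = 1} := ⟨bellVec (-(1/s)) (-(1/s)) 0, hnb1⟩ with hb1
  set b2 : {v : EuclideanSpace ℝ (Fin 3) // ‖v‖ = 1} := ⟨bellVec (-(1/s)) (1/s) 0, hnb2⟩ with hb2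
  -- correlator functions
  set f : {v : EuclideanSpace ℝ (Fin 3) // ‖v‖ = 1} → Λ → ℝ :=
    fun a l => p 1 a l - p (-1) a l with hf
  set g : {v : EuclideanSpace ℝ (Fin 3) // ‖v‖ = 1} → Λ → ℝ :=
    fun b l => q 1 b l - q (-1) b l with hg
  have hfb : ∀ a l, |f a l| ≤ 1 := by
    intro a l
    have h1 := hp0 1 (Or.inl rfl) a l
    have h2 := hp0 (-1) (Or.inr rfl) a l
    have h3 := hpsum a l
    rw [hf, abs_le]; constructor <;> simp <;> linarith
  have hgb : ∀ b l, |g b l| ≤ 1 := by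
    intro b l
    have h1 := hq0 1 (Or.inl rfl) b l
    have h2 := hq0 (-1) (Or.inr rfl) b l
    have h3 := hqsum b l
    rw [hg, abs_le]; constructor <;> simp <;> linarith
  -- integrability of the elementary products
  have hint : ∀ (A B : ℝ), (A = 1 ∨ A = -1) → (B = 1 ∨ B = -1) → ∀ a b,
      Integrable (fun l => p A a l * q B b l) μ := by
    intro A B hA hB a b
    refine ⟨((hpm A a).mul (hqm B b)).aestronglyMeasurable, ?_⟩
    apply HasFiniteIntegral.of_bounded (C := 1)
    filter_upwards with l
    rw [Real.norm_eq_abs, abs_mul,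
      abs_of_nonneg (hp0 A hA a l), abs_of_nonneg (hq0 B hB b l)]
    nlinarith [hp1 A hA a l, hq1 B hB b l, hp0 A hA a l, hq0 B hB b l]
  -- integrability of f·g
  have hintfg : ∀ a b, Integrable (fun l => f a l * g b l) μ := by
    intro a b
    refine ⟨(((hpm 1 a).sub (hpm (-1) a)).mul ((hqm 1 b).sub (hqm (-1) b))).aestronglyMeasurable, ?_⟩
    apply HasFiniteIntegral.of_bounded (C := 1)
    filter_upwards with l
    rw [Real.norm_eq_abs, abs_mul]
    nlinarith [hfb a l, hgb b l, abs_nonneg (f a l), abs_nonneg (g b l)]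
  -- the singlet correlator
  have hE : ∀ a b, (∫ l, f a l * g b l ∂μ)
      = -⟪(a : EuclideanSpace ℝ (Fin 3)), (b : EuclideanSpace ℝ (Fin 3))⟫ := by
    intro a b
    have e : (fun l => f a l * g b l) = fun l =>
        (p 1 a l * q 1 b l - p 1 a l * q (-1) b l)
          - (p (-1) a l * q 1 b l - p (-1) a l * q (-1) b l) := by
      funext l; rw [hf, hg]; ring
    have i11 := hint 1 1 (Or.inl rfl) (Or.inl rfl) a b
    have i12 := hint 1 (-1) (Or.inl rfl) (Or.inr rfl) a b
    have i21 := hint (-1) 1 (Or.inr rfl) (Or.inl rfl) a b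
    have i22 := hint (-1) (-1) (Or.inr rfl) (Or.inr rfl) a b
    have isub1 : Integrable (fun l => p 1 a l * q 1 b l - p 1 a l * q (-1) b l) μ := i11.sub i12
    have isub2 : Integrable (fun l => p (-1) a l * q 1 b l - p (-1) a l * q (-1) b l) μ :=
      i21.sub i22
    rw [e, integral_sub isub1 isub2, integral_sub i11 i12, integral_sub i21 i22,
      h 1 1 (Or.inl rfl) (Or.inl rfl) a b, h 1 (-1) (Or.inl rfl) (Or.inr rfl) a b,
      h (-1) 1 (Or.inr rfl) (Or.inl rfl) a b, h (-1) (-1) (Or.inr rfl) (Or.inr rfl) a b]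
    ring
  -- CHSH inequality
  have hCHSH : |(∫ l, f a1 l * g b1 l ∂μ) + (∫ l, f a1 l * g b2 l ∂μ)
      + (∫ l, f a2 l * g b1 l ∂μ) - (∫ l, f a2 l * g b2 l ∂μ)| ≤ 2 := by
    have jadd1 : Integrable (fun l => f a1 l * g b1 l + f a1 l * g b2 l) μ :=
      (hintfg a1 b1).add (hintfg a1 b2)
    have jadd2 : Integrable (fun l => f a1 l * g b1 l + f a1 l * g b2 l + f a2 l * g b1 l) μ :=
      jadd1.add (hintfg a2 b1)
    rw [← integral_add (hintfg a1 b1) (hintfg a1 b2), ← integral_add jadd1 (hintfg a2 b1),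
        ← integral_sub jadd2 (hintfg a2 b2)]
    have := MeasureTheory.norm_integral_le_of_norm_le_const (μ := μ) (C := 2)
      (f := fun l => f a1 l * g b1 l + f a1 l * g b2 l + f a2 l * g b1 l - f a2 l * g b2 l)
      (by
        filter_upwards with l
        rw [Real.norm_eq_abs]
        exact bell_chsh_pt _ _ _ _ (hfb a1 l) (hgb b1 l) (hfb a2 l) (hgb b2 l))
    rw [Real.norm_eq_abs, probReal_univ, mul_one] at this
    exact this
  -- compute the CHSH value for the singlet correlations
  have i11 : ⟪(a1 : EuclideanSpace ℝ (Fin 3)), (b1 : EuclideanSpace ℝ (Fin 3))⟫ = -(1/s) := by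
    rw [ha1, hb1]; rw [bellVec_inner]; ring
  have i12 : ⟪(a1 : EuclideanSpace ℝ (Fin 3)), (b2 : EuclideanSpace ℝ (Fin 3))⟫ = -(1/s) := by
    rw [ha1, hb2]; rw [bellVec_inner]; ring
  have i21 : ⟪(a2 : EuclideanSpace ℝ (Fin 3)), (b1 : EuclideanSpace ℝ (Fin 3))⟫ = -(1/s) := by
    rw [ha2, hb1]; rw [bellVec_inner]; ring
  have i22 : ⟪(a2 : EuclideanSpace ℝ (Fin 3)), (b2 : EuclideanSpace ℝ (Fin 3))⟫ = 1/s := by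
    rw [ha2, hb2]; rw [bellVec_inner]; ring
  rw [hE a1 b1, hE a1 b2, hE a2 b1, hE a2 b2, i11, i12, i21, i22] at hCHSH
  have hval : -(-(1/s)) + -(-(1/s)) + -(-(1/s)) - -(1/s) = 4/s := by ring
  rw [hval] at hCHSH
  have h4s : (2:ℝ) < 4/s := by
    rw [lt_div_iff₀ hs0]; nlinarith
  have := abs_le.mp hCHSH
  linarith [this.2]
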